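/- The simple graph G on vertex set {1,2,3,4,5,6,7} with edge set {{1,2},{1,3},{1,7},{2,3},{2,4},{2,6},{2,7},{3,5},{3,7},{4,5},{5,6}} (graph number 832 in the Atlas of Graphs) has minimum rank 3 over the real numbers. -/

import Mathlib

/-- Edge list of graph number 832 in the Atlas of Graphs (vertices 1..7). -/
def atlas832Edges : List (ℕ × ℕ) := [(1,2),(1,3),(1,7),(2,3),(2,4),(2,6),(2,7),(3,5),(3,7),(4,5),(5,6)]

def Az832 : Matrix (Fin 7) (Fin 7) ℤ :=
  !![1, 1, 1, 0, 0, 0, 1;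
     1, 0, -1, -1, 0, -1, 1;
     1, -1, 1, 0, 2, 0, 1;
     0, -1, 0, 0, 1, 0, 0;
     0, 0, 2, 1, 1, 1, 0;
     0, -1, 0, 0, 1, 0, 0;
     1, 1, 1, 0, 0, 0, 1]

def Bz832 : Matrix (Fin 7) (Fin 3) ℤ :=
  !![1,0,0; 1,0,1; 1,2,2; 0,1,1; 0,1,0; 0,1,1; 1,0,0]

def Cz832 : Matrix (Fin 3) (Fin 7) ℤ :=
  !![1,1,1,0,0,0,1; 0,0,2,1,1,1,0; 0,-1,-2,-1,0,-1,0]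

noncomputable def A832 : Matrix (Fin 7) (Fin 7) ℝ := Az832.map (Int.cast)

lemma rank_sub_le (A : Matrix (Fin 7) (Fin 7) ℝ) (f g : Fin 3 → Fin 7) :
    (A.submatrix f g).rank ≤ A.rank := by
  have h1 : ((1 : Matrix (Fin 7) (Fin 7) ℝ).submatrix f (Equiv.refl (Fin 7))) *
      (A * ((1 : Matrix (Fin 7) (Fin 7) ℝ).submatrix (Equiv.refl (Fin 7)) g))
      = A.submatrix f g := by
    rw [Matrix.mul_submatrix_one, Matrix.one_submatrix_mul]
    simp
  calc (A.submatrix f g).rank = _ := by rw [← h1]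
    _ ≤ (A * ((1 : Matrix (Fin 7) (Fin 7) ℝ).submatrix (Equiv.refl (Fin 7)) g)).rank :=
        Matrix.rank_mul_le_right _ _
    _ ≤ A.rank := Matrix.rank_mul_le_left _ _

lemma lower_bound (A : Matrix (Fin 7) (Fin 7) ℝ)
    (h : ∀ i j : Fin 7, i ≠ j →
      (A i j ≠ 0 ↔
        ((i.val + 1, j.val + 1) ∈ atlas832Edges ∨
         (j.val + 1, i.val + 1) ∈ atlas832Edges))) : 3 ≤ A.rank := by
  have h02 : A 0 2 ≠ 0 := (h 0 2 (by decide)).mpr (by decide)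
  have h31 : A 3 1 ≠ 0 := (h 3 1 (by decide)).mpr (by decide)
  have h45 : A 4 5 ≠ 0 := (h 4 5 (by decide)).mpr (by decide)
  have h05 : A 0 5 = 0 := by
    by_contra hc; exact absurd ((h 0 5 (by decide)).mp hc) (by decide)
  have h32 : A 3 2 = 0 := by
    by_contra hc; exact absurd ((h 3 2 (by decide)).mp hc) (by decide)
  have h35 : A 3 5 = 0 := by
    by_contra hc; exact absurd ((h 3 5 (by decide)).mp hc) (by decide)
  have h41 : A 4 1 = 0 := by
    by_contra hc; exact absurd ((h 4 1 (by decide)).mp hc) (by decide)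
  set M := A.submatrix ![0,3,4] ![1,2,5] with hM
  have hdet : M.det ≠ 0 := by
    rw [Matrix.det_fin_three]
    simp only [hM, Matrix.submatrix_apply]
    simp only [Matrix.cons_val_zero, Matrix.cons_val_one, Matrix.head_cons,
      Matrix.cons_val_two, Matrix.tail_cons]
    rw [h05, h32, h35, h41]
    ring_nf
    simpa using ⟨⟨h45, h02⟩, h31⟩
  have hrank : M.rank = 3 := by
    rw [Matrix.rank_of_isUnit M (by rwa [Matrix.isUnit_iff_isUnit_det, isUnit_iff_ne_zero])]
    simp
  calc (3:ℕ) = M.rank := hrank.symm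
    _ ≤ A.rank := rank_sub_le A _ _

lemma A832_pattern : ∀ i j : Fin 7, i ≠ j →
    (A832 i j ≠ 0 ↔
      ((i.val + 1, j.val + 1) ∈ atlas832Edges ∨
       (j.val + 1, i.val + 1) ∈ atlas832Edges)) := by
  have key : ∀ i j : Fin 7, i ≠ j →
      (Az832 i j ≠ 0 ↔
        ((i.val + 1, j.val + 1) ∈ atlas832Edges ∨
         (j.val + 1, i.val + 1) ∈ atlas832Edges)) := by
    letI : ∀ a b : Fin 7, Decidable (Az832 a b = 0) := fun a b => Int.decEq _ _
    decide
  intro i j hij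
  have h2 : A832 i j = ((Az832 i j : ℤ) : ℝ) := rfl
  rw [h2, ne_eq, Int.cast_eq_zero, ← ne_eq]
  exact key i j hij

theorem atlas832_minRank_eq_three :
    IsLeast {r : ℕ | ∃ A : Matrix (Fin 7) (Fin 7) ℝ, A.IsSymm ∧
        (∀ i j : Fin 7, i ≠ j →
          (A i j ≠ 0 ↔
            ((i.val + 1, j.val + 1) ∈ atlas832Edges ∨
             (j.val + 1, i.val + 1) ∈ atlas832Edges))) ∧
        A.rank = r} 3 := by
  constructor
  · refine ⟨A832, ?_, A832_pattern, ?_⟩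
    · exact Matrix.IsSymm.map (by decide : Az832.IsSymm) _
    · have hfacz : Az832 = Bz832 * Cz832 := by decide
      have hfac : A832 = Bz832.map (Int.cast) * Cz832.map (Int.cast) := by
        have hm := Matrix.map_mul (L := Bz832) (M := Cz832) (f := Int.castRingHom ℝ)
        simp only [Int.coe_castRingHom] at hm
        rw [A832, hfacz, hm]
        rfl
      have hle : A832.rank ≤ 3 := by
        rw [hfac]
        exact (Matrix.rank_mul_le_left _ _).trans (Matrix.rank_le_width _)
      have hge : 3 ≤ A832.rank := lower_bound A832 A832_pattern
      omega
  · rintro r ⟨A, -, h, rfl⟩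
    exact lower_bound A h
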